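/- Let V be a finite set of n points in a metric space with distance d, and let K be a natural number with K < n ≤ 2K (so that ⌈n/K⌉ = 2). Then the minimum, over all subsets A ⊆ V with |A| = K, of the bipartition cut cut(A) = ∑_{a∈A, b∈V∖A} d(a,b), is at most twice the minimum of the inter-group distance over all partitions of V into nonempty parts each of size at most K. (SpltBOpt is a 2-approximation for the Splt problem when the number of balanced parts is 2.) -/

import Mathlib

open Finset

/-- The inter-group distance (Splt objective) of a partition `G 0, …, G (x-1)`:
the sum of `dist a b` over all unordered pairs of points lying in different
parts, each cross pair counted once. -/
noncomputable def interDist {X : Type*} [MetricSpace X] {x : ℕ}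
    (G : Fin x → Finset X) : ℝ :=
  ∑ i : Fin x, ∑ j : Fin x,
    if i < j then ∑ a ∈ G i, ∑ b ∈ G j, dist a b else 0

/-- `G` is a partition of `V` into nonempty pairwise disjoint parts. -/
def IsPartitionOf {X : Type*} [DecidableEq X] {x : ℕ} (V : Finset X)
    (G : Fin x → Finset X) : Prop :=
  (∀ i, (G i).Nonempty) ∧ (∀ i j, i ≠ j → Disjoint (G i) (G j)) ∧
    Finset.univ.biUnion G = V

noncomputable def pairD {X : Type*} [MetricSpace X] {x : ℕ}
    (G : Fin x → Finset X) (i j : Fin x) : ℝ :=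
  ∑ a ∈ G i, ∑ b ∈ G j, dist a b

lemma pairD_nonneg {X : Type*} [MetricSpace X] {x : ℕ}
    (G : Fin x → Finset X) (i j : Fin x) : 0 ≤ pairD G i j := by
  unfold pairD
  exact Finset.sum_nonneg fun a _ => Finset.sum_nonneg fun b _ => dist_nonneg

lemma pairD_symm {X : Type*} [MetricSpace X] {x : ℕ}
    (G : Fin x → Finset X) (i j : Fin x) : pairD G i j = pairD G j i := by
  unfold pairD
  rw [Finset.sum_comm]
  exact Finset.sum_congr rfl fun b _ => Finset.sum_congr rfl fun a _ => dist_comm a b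

lemma interDist_eq {X : Type*} [MetricSpace X] {x : ℕ}
    (G : Fin x → Finset X) :
    interDist G = ∑ p ∈ (univ ×ˢ univ).filter (fun p : Fin x × Fin x => p.1 < p.2),
      pairD G p.1 p.2 := by
  rw [Finset.sum_filter, Finset.sum_product]
  rfl

lemma sum_pairD_le {X : Type*} [MetricSpace X] {x : ℕ}
    (G : Fin x → Finset X) (E : Finset (Fin x × Fin x))
    (hanti : ∀ p ∈ E, Prod.swap p ∉ E) :
    ∑ p ∈ E, pairD G p.1 p.2 ≤ interDist G := by
  classical
  have hdiagfree : ∀ p ∈ E, p.1 ≠ p.2 := by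
    intro p hp h
    exact hanti p hp (by rwa [show Prod.swap p = p from Prod.ext (by simp [h]) (by simp [h])])
  set E₁ := E.filter (fun p => p.1 < p.2) with hE₁
  set E₂ := (E.filter (fun p => p.2 < p.1)).image Prod.swap with hE₂
  have hsum2 : ∑ p ∈ E₂, pairD G p.1 p.2 = ∑ p ∈ E.filter (fun p => p.2 < p.1), pairD G p.1 p.2 := by
    rw [hE₂, Finset.sum_image (fun a _ b _ h => Prod.swap_injective h)]
    exact Finset.sum_congr rfl fun p _ => by simp [pairD_symm]
  have hfeq : E.filter (fun p => ¬ p.1 < p.2) = E.filter (fun p => p.2 < p.1) := by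
    apply Finset.filter_congr
    intro p hp
    have := hdiagfree p hp
    simp only [not_lt]
    constructor
    · intro h; exact lt_of_le_of_ne h (Ne.symm this)
    · intro h; exact le_of_lt h
  have hEsum : ∑ p ∈ E, pairD G p.1 p.2
      = ∑ p ∈ E₁, pairD G p.1 p.2 + ∑ p ∈ E₂, pairD G p.1 p.2 := by
    rw [hsum2, hE₁, ← hfeq, Finset.sum_filter_add_sum_filter_not]
  rw [hEsum, interDist_eq]
  have hdisj : Disjoint E₁ E₂ := by
    rw [Finset.disjoint_left]
    intro p hp₁ hp₂
    rw [hE₂, Finset.mem_image] at hp₂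
    obtain ⟨q, hq, hqp⟩ := hp₂
    have hqE : q ∈ E := Finset.mem_filter.mp hq |>.1
    have hpE : p ∈ E := Finset.mem_filter.mp hp₁ |>.1
    exact hanti q hqE (by rwa [hqp])
  rw [← Finset.sum_union hdisj]
  apply Finset.sum_le_sum_of_subset_of_nonneg
  · intro p hp
    rw [Finset.mem_union] at hp
    rw [Finset.mem_filter]
    refine ⟨Finset.mem_product.mpr ⟨Finset.mem_univ _, Finset.mem_univ _⟩, ?_⟩
    rcases hp with hp | hp
    · exact (Finset.mem_filter.mp hp).2
    · rw [hE₂, Finset.mem_image] at hp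
      obtain ⟨q, hq, hqp⟩ := hp
      have := (Finset.mem_filter.mp hq).2
      rw [← hqp]; simpa using this
  · intro p _ _
    exact pairD_nonneg G p.1 p.2

lemma sum_biUnion_pairs {X : Type*} [MetricSpace X] [DecidableEq X] {x : ℕ}
    (G : Fin x → Finset X) (hdisj : ∀ i j, i ≠ j → Disjoint (G i) (G j))
    (s t : Finset (Fin x)) :
    ∑ a ∈ s.biUnion G, ∑ b ∈ t.biUnion G, dist a b = ∑ i ∈ s, ∑ j ∈ t, pairD G i j := by
  have hpd : ∀ u : Finset (Fin x), (↑u : Set (Fin x)).PairwiseDisjoint G :=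
    fun u i _ j _ hij => hdisj i j hij
  rw [Finset.sum_biUnion (hpd s)]
  refine Finset.sum_congr rfl fun i _ => ?_
  have : ∀ a : X, ∑ b ∈ t.biUnion G, dist a b = ∑ j ∈ t, ∑ b ∈ G j, dist a b :=
    fun a => Finset.sum_biUnion (hpd t)
  calc ∑ a ∈ G i, ∑ b ∈ t.biUnion G, dist a b
      = ∑ a ∈ G i, ∑ j ∈ t, ∑ b ∈ G j, dist a b := Finset.sum_congr rfl fun a _ => this a
    _ = ∑ j ∈ t, ∑ a ∈ G i, ∑ b ∈ G j, dist a b := Finset.sum_comm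
    _ = ∑ j ∈ t, pairD G i j := rfl

/-- SpltBOpt is a 2-approximation for Splt when the number of balanced parts is
two: for `K < n ≤ 2K`, the minimum over size-`K` subsets `A ⊆ V` of the
bipartition cut `∑_{a ∈ A, b ∈ V∖A} d(a,b)` is at most twice the inter-group
distance of any partition of `V` into nonempty parts of size at most `K`. -/
theorem spltBOpt_two_approx {X : Type*} [MetricSpace X] [DecidableEq X]
    (V : Finset X) (K : ℕ) (hK : K < V.card) (hn : V.card ≤ 2 * K)
    (x : ℕ) (G : Fin x → Finset X) (hpart : IsPartitionOf V G)
    (hsize : ∀ i, (G i).card ≤ K) :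
    ∃ A ⊆ V, A.card = K ∧
      (∑ a ∈ A, ∑ b ∈ V \ A, dist a b) ≤ 2 * interDist G := by
  classical
  obtain ⟨hne, hdisj, hcover⟩ := hpart
  have hGV : ∀ i, G i ⊆ V := fun i => hcover ▸ Finset.subset_biUnion_of_mem G (mem_univ i)
  have hcardsum : ∀ s : Finset (Fin x), (s.biUnion G).card = ∑ i ∈ s, (G i).card :=
    fun s => Finset.card_biUnion (fun i _ j _ hij => hdisj i j hij)
  have hnV : ∑ i : Fin x, (G i).card = V.card := by rw [← hcardsum, hcover]
  -- Step 1: a maximal collection `W` of parts of total size ≤ K,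
  -- and an extra part `i₀ ∉ W` with `|G i₀| ≤ ∑_{i ∈ W} |G i|` and
  -- `K < ∑_{i ∈ W} |G i| + |G i₀|`.
  obtain ⟨W, hWmem, hWmax⟩ := Finset.exists_max_image
    ((univ : Finset (Finset (Fin x))).filter fun W => ∑ i ∈ W, (G i).card ≤ K)
    (fun W => ∑ i ∈ W, (G i).card) ⟨∅, by simp⟩
  rw [mem_filter] at hWmem
  have hwK : ∑ i ∈ W, (G i).card ≤ K := hWmem.2
  have hmax : ∀ W' : Finset (Fin x), (∑ i ∈ W', (G i).card ≤ K) →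
      ∑ i ∈ W', (G i).card ≤ ∑ i ∈ W, (G i).card :=
    fun W' h => hWmax W' (mem_filter.mpr ⟨mem_univ _, h⟩)
  have hWne : ∃ i, i ∉ W := by
    by_contra h
    push_neg at h
    have hWu : W = univ := Finset.eq_univ_iff_forall.mpr h
    rw [hWu, hnV] at hwK
    omega
  have hi₀ : ∃ i₀, i₀ ∉ W ∧ (G i₀).card ≤ ∑ i ∈ W, (G i).card := by
    by_contra h
    push_neg at h
    obtain ⟨i₁, hi₁⟩ := hWne
    have h1 : ∑ i ∈ ({i₁} : Finset (Fin x)), (G i).card ≤ K := by simpa using hsize i₁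
    have h2 := hmax _ h1
    simp only [Finset.sum_singleton] at h2
    exact absurd (h i₁ hi₁) (not_lt.mpr h2)
  obtain ⟨i₀, hi₀W, hPw⟩ := hi₀
  have hKlt : K < ∑ i ∈ W, (G i).card + (G i₀).card := by
    by_contra h
    push_neg at h
    have h2 : ∑ i ∈ insert i₀ W, (G i).card ≤ K := by
      rw [Finset.sum_insert hi₀W]; omega
    have h3 := hmax _ h2
    rw [Finset.sum_insert hi₀W] at h3
    have h4 := (hne i₀).card_pos
    omega
  -- Step 2: construct `A` and the decomposition of `V \ A`.
  set w := ∑ i ∈ W, (G i).card with hwdef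
  obtain ⟨S, hSsub, hScard⟩ := Finset.exists_subset_card_eq (show K - w ≤ (G i₀).card by omega)
  set T := G i₀ \ S with hTdef
  set WS := W.biUnion G with hWSdef
  set Zc := (univ : Finset (Fin x)) \ insert i₀ W with hZcdef
  set ZS := Zc.biUnion G with hZSdef
  set A := WS ∪ S with hAdef
  have hZcmem : ∀ j ∈ Zc, j ∉ W ∧ j ≠ i₀ := by
    intro j hj
    rw [hZcdef, mem_sdiff, mem_insert] at hj
    push_neg at hj
    exact ⟨hj.2.2, hj.2.1⟩
  have hi₀Zc : i₀ ∉ Zc := by simp [hZcdef]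
  have hWScard : WS.card = w := hcardsum W
  have hWSP : Disjoint WS (G i₀) := by
    rw [hWSdef, Finset.disjoint_biUnion_left]
    exact fun i hi => hdisj i i₀ (fun h => hi₀W (h ▸ hi))
  have hWSS : Disjoint WS S := hWSP.mono_right hSsub
  have hWSV : WS ⊆ V := by
    rw [hWSdef, ← hcover]
    exact biUnion_subset_biUnion_of_subset_left G (subset_univ W)
  have hAV : A ⊆ V := union_subset hWSV (hSsub.trans (hGV i₀))
  have hAcard : A.card = K := by
    rw [hAdef, card_union_of_disjoint hWSS, hWScard, hScard]; omega
  have hbi : ∀ (s t : Finset (Fin x)), (s ∪ t).biUnion G = s.biUnion G ∪ t.biUnion G := by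
    intro s t
    ext b
    simp only [mem_biUnion, mem_union]
    constructor
    · rintro ⟨i, hi | hi, hb⟩
      · exact Or.inl ⟨i, hi, hb⟩
      · exact Or.inr ⟨i, hi, hb⟩
    · rintro (⟨i, hi, hb⟩ | ⟨i, hi, hb⟩)
      · exact ⟨i, Or.inl hi, hb⟩
      · exact ⟨i, Or.inr hi, hb⟩
  have hVdecomp : V = (G i₀ ∪ WS) ∪ ZS := by
    rw [← hcover,
      show (univ : Finset (Fin x)) = insert i₀ W ∪ Zc from
        (Finset.union_sdiff_of_subset (subset_univ _)).symm,
      hbi, Finset.biUnion_insert]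
  have hPZS : Disjoint (G i₀) ZS := by
    rw [hZSdef, Finset.disjoint_biUnion_right]
    exact fun j hj => hdisj i₀ j (fun h => (hZcmem j hj).2 h.symm)
  have hWSZS : Disjoint WS ZS := by
    rw [hWSdef, hZSdef, Finset.disjoint_biUnion_left]
    intro i hi
    rw [Finset.disjoint_biUnion_right]
    exact fun j hj => hdisj i j (fun h => (hZcmem j hj).1 (h ▸ hi))
  have hcompl : V \ A = ZS ∪ T := by
    ext b
    have h1 : b ∈ WS → b ∈ G i₀ → False := fun h h' => (Finset.disjoint_left.mp hWSP h) h'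
    have h2 : b ∈ ZS → b ∈ G i₀ → False := fun h h' => (Finset.disjoint_right.mp hPZS h) h'
    have h3 : b ∈ ZS → b ∈ WS → False := fun h h' => (Finset.disjoint_right.mp hWSZS h) h'
    have h4 : b ∈ S → b ∈ G i₀ := fun h => hSsub h
    simp only [hVdecomp, hTdef, hAdef, Finset.mem_sdiff, Finset.mem_union]
    constructor
    · rintro ⟨hb, hnb⟩
      rcases hb with (hb | hb) | hb
      · exact Or.inr ⟨hb, fun h => hnb (Or.inr h)⟩
      · exact absurd (Or.inl hb) hnb
      · exact Or.inl hb
    · rintro (hb | ⟨hb, hnS⟩)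
      · refine ⟨Or.inr hb, ?_⟩
        rintro (h | h)
        · exact h3 hb h
        · exact h2 hb (h4 h)
      · refine ⟨Or.inl (Or.inl hb), ?_⟩
        rintro (h | h)
        · exact h1 h hb
        · exact hnS h
  -- Step 3: decompose the cut into four sums.
  have hZT : Disjoint ZS T := hPZS.symm.mono_right (sdiff_subset)
  have hsplit : ∀ (U : Finset X), ∑ a ∈ U, ∑ b ∈ ZS ∪ T, dist a b
      = ∑ a ∈ U, ∑ b ∈ ZS, dist a b + ∑ a ∈ U, ∑ b ∈ T, dist a b := by
    intro U
    rw [← Finset.sum_add_distrib]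
    exact Finset.sum_congr rfl fun a _ => Finset.sum_union hZT
  have hcut : ∑ a ∈ A, ∑ b ∈ V \ A, dist a b
      = (∑ a ∈ WS, ∑ b ∈ ZS, dist a b + ∑ a ∈ WS, ∑ b ∈ T, dist a b)
        + (∑ a ∈ S, ∑ b ∈ ZS, dist a b + ∑ a ∈ S, ∑ b ∈ T, dist a b) := by
    rw [hcompl, hAdef, Finset.sum_union hWSS, hsplit WS, hsplit S]
  -- Step 4: bound the three cross-part sums by `interDist G`.
  have hsingle : ({i₀} : Finset (Fin x)).biUnion G = G i₀ := Finset.singleton_biUnion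
  have ht1 : ∑ a ∈ WS, ∑ b ∈ ZS, dist a b = ∑ i ∈ W, ∑ j ∈ Zc, pairD G i j := by
    rw [hWSdef, hZSdef]; exact sum_biUnion_pairs G hdisj W Zc
  have ht2 : ∑ a ∈ WS, ∑ b ∈ T, dist a b ≤ ∑ i ∈ W, ∑ j ∈ ({i₀} : Finset (Fin x)), pairD G i j := by
    have : ∑ a ∈ WS, ∑ b ∈ T, dist a b ≤ ∑ a ∈ WS, ∑ b ∈ G i₀, dist a b := by
      refine Finset.sum_le_sum fun a _ => ?_
      refine Finset.sum_le_sum_of_subset_of_nonneg (by rw [hTdef]; exact sdiff_subset) ?_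
      intro b _ _; exact dist_nonneg
    refine this.trans_eq ?_
    rw [hWSdef, ← hsingle]
    exact sum_biUnion_pairs G hdisj W {i₀}
  have ht3 : ∑ a ∈ S, ∑ b ∈ ZS, dist a b ≤ ∑ i ∈ ({i₀} : Finset (Fin x)), ∑ j ∈ Zc, pairD G i j := by
    have : ∑ a ∈ S, ∑ b ∈ ZS, dist a b ≤ ∑ a ∈ G i₀, ∑ b ∈ ZS, dist a b := by
      refine Finset.sum_le_sum_of_subset_of_nonneg hSsub ?_
      intro a _ _
      exact Finset.sum_nonneg fun b _ => dist_nonneg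
    refine this.trans_eq ?_
    rw [hZSdef, ← hsingle]
    exact sum_biUnion_pairs G hdisj {i₀} Zc
  -- The index set for the cross-part pairs.
  have hB1 : ∑ a ∈ WS, ∑ b ∈ ZS, dist a b + ∑ a ∈ WS, ∑ b ∈ T, dist a b
      + ∑ a ∈ S, ∑ b ∈ ZS, dist a b ≤ interDist G := by
    set E : Finset (Fin x × Fin x) := W ×ˢ Zc ∪ W ×ˢ {i₀} ∪ {i₀} ×ˢ Zc with hE
    have hd1 : Disjoint (W ×ˢ Zc) (W ×ˢ ({i₀} : Finset (Fin x))) := by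
      rw [Finset.disjoint_left]
      rintro p hp hq
      rw [Finset.mem_product] at hp hq
      rw [Finset.mem_singleton] at hq
      exact hi₀Zc (hq.2 ▸ hp.2)
    have hd2 : Disjoint (W ×ˢ Zc ∪ W ×ˢ ({i₀} : Finset (Fin x))) (({i₀} : Finset (Fin x)) ×ˢ Zc) := by
      rw [Finset.disjoint_left]
      rintro p hp hq
      rw [Finset.mem_product, Finset.mem_singleton] at hq
      rw [Finset.mem_union, Finset.mem_product, Finset.mem_product] at hp
      rcases hp with hp | hp
      · exact hi₀W (hq.1 ▸ hp.1)
      · exact hi₀W (hq.1 ▸ hp.1)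
    have hEsum : ∑ p ∈ E, pairD G p.1 p.2
        = ∑ i ∈ W, ∑ j ∈ Zc, pairD G i j
          + ∑ i ∈ W, ∑ j ∈ ({i₀} : Finset (Fin x)), pairD G i j
          + ∑ i ∈ ({i₀} : Finset (Fin x)), ∑ j ∈ Zc, pairD G i j := by
      rw [hE, Finset.sum_union hd2, Finset.sum_union hd1,
        Finset.sum_product, Finset.sum_product, Finset.sum_product]
    have hanti : ∀ p ∈ E, Prod.swap p ∉ E := by
      intro p hp hq
      rw [hE, Finset.mem_union, Finset.mem_union, Finset.mem_product, Finset.mem_product,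
        Finset.mem_product, Finset.mem_singleton, Finset.mem_singleton] at hp hq
      simp only [Prod.fst_swap, Prod.snd_swap] at hq
      rcases hp with (⟨h1, h2⟩ | ⟨h1, h2⟩) | ⟨h1, h2⟩ <;>
        rcases hq with (⟨g1, g2⟩ | ⟨g1, g2⟩) | ⟨g1, g2⟩
      · exact (hZcmem _ h2).1 g1
      · exact (hZcmem _ h2).1 g1
      · exact (hZcmem _ h2).2 g1
      · exact hi₀W (h2 ▸ g1)
      · exact hi₀W (g2 ▸ h1)
      · exact (hZcmem _ g2).1 h1
      · exact (hZcmem _ g2).2 h1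
      · exact (hZcmem _ h2).1 g1
      · exact (hZcmem _ h2).2 g1
    calc ∑ a ∈ WS, ∑ b ∈ ZS, dist a b + ∑ a ∈ WS, ∑ b ∈ T, dist a b
          + ∑ a ∈ S, ∑ b ∈ ZS, dist a b
        ≤ ∑ i ∈ W, ∑ j ∈ Zc, pairD G i j
          + ∑ i ∈ W, ∑ j ∈ ({i₀} : Finset (Fin x)), pairD G i j
          + ∑ i ∈ ({i₀} : Finset (Fin x)), ∑ j ∈ Zc, pairD G i j := by
          rw [ht1]
          exact add_le_add (add_le_add le_rfl ht2) ht3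
      _ = ∑ p ∈ E, pairD G p.1 p.2 := hEsum.symm
      _ ≤ interDist G := sum_pairD_le G E hanti
  -- Step 5: bound the within-part sum by averaging over `C = V \ G i₀`.
  set C := ((univ : Finset (Fin x)) \ {i₀}).biUnion G with hCdef
  set m := C.card with hmdef
  have hWC : WS ⊆ C := by
    rw [hWSdef, hCdef]
    refine biUnion_subset_biUnion_of_subset_left G ?_
    intro i hi
    rw [mem_sdiff, mem_singleton]
    exact ⟨mem_univ _, fun h => hi₀W (h ▸ hi)⟩
  have hwm : w ≤ m := by
    rw [hmdef, ← hWScard]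
    exact Finset.card_le_card hWC
  have hTcard : T.card ≤ (G i₀).card := Finset.card_le_card (by rw [hTdef]; exact sdiff_subset)
  have hSm : S.card ≤ m := by
    rw [hScard]; omega
  have hTm : T.card ≤ m := by omega
  have hm1 : 0 < m := by
    have := (hne i₀).card_pos
    omega
  have havg : ∑ a ∈ S, ∑ b ∈ T, dist a b ≤ ∑ a ∈ G i₀, ∑ c ∈ C, dist a c := by
    have hmpos : (0:ℝ) < (m:ℝ) := by exact_mod_cast hm1
    rw [← mul_le_mul_iff_right₀ hmpos]
    have key : ∀ c : X, ∑ a ∈ S, ∑ b ∈ T, dist a b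
        ≤ (T.card : ℝ) * ∑ a ∈ S, dist a c + (S.card : ℝ) * ∑ b ∈ T, dist c b := by
      intro c
      have h1 : ∑ a ∈ S, ∑ b ∈ T, dist a b ≤ ∑ a ∈ S, ∑ b ∈ T, (dist a c + dist c b) :=
        Finset.sum_le_sum fun a _ => Finset.sum_le_sum fun b _ => dist_triangle a c b
      have h2 : ∑ a ∈ S, ∑ b ∈ T, (dist a c + dist c b)
          = (T.card : ℝ) * ∑ a ∈ S, dist a c + (S.card : ℝ) * ∑ b ∈ T, dist c b := by
        calc ∑ a ∈ S, ∑ b ∈ T, (dist a c + dist c b)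
            = ∑ a ∈ S, ((T.card : ℝ) * dist a c + ∑ b ∈ T, dist c b) := by
              refine Finset.sum_congr rfl fun a _ => ?_
              rw [Finset.sum_add_distrib, Finset.sum_const, nsmul_eq_mul]
          _ = (T.card : ℝ) * ∑ a ∈ S, dist a c + (S.card : ℝ) * ∑ b ∈ T, dist c b := by
              rw [Finset.sum_add_distrib, ← Finset.mul_sum, Finset.sum_const, nsmul_eq_mul]
      exact h1.trans_eq h2
    calc (m : ℝ) * ∑ a ∈ S, ∑ b ∈ T, dist a b
        = ∑ _c ∈ C, ∑ a ∈ S, ∑ b ∈ T, dist a b := by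
          rw [Finset.sum_const, nsmul_eq_mul, hmdef]
      _ ≤ ∑ c ∈ C, ((T.card : ℝ) * ∑ a ∈ S, dist a c + (S.card : ℝ) * ∑ b ∈ T, dist c b) :=
          Finset.sum_le_sum fun c _ => key c
      _ ≤ ∑ c ∈ C, ((m : ℝ) * ∑ a ∈ S, dist a c + (m : ℝ) * ∑ b ∈ T, dist c b) := by
          refine Finset.sum_le_sum fun c _ => add_le_add ?_ ?_
          · refine mul_le_mul_of_nonneg_right ?_ (Finset.sum_nonneg fun a _ => dist_nonneg)
            exact_mod_cast hTm
          · refine mul_le_mul_of_nonneg_right ?_ (Finset.sum_nonneg fun b _ => dist_nonneg)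
            exact_mod_cast hSm
      _ = (m : ℝ) * (∑ c ∈ C, ∑ a ∈ S, dist a c + ∑ c ∈ C, ∑ b ∈ T, dist c b) := by
          rw [← Finset.sum_add_distrib, Finset.mul_sum]
          exact Finset.sum_congr rfl fun c _ => by ring
      _ = (m : ℝ) * ∑ a ∈ G i₀, ∑ c ∈ C, dist a c := by
          congr 1
          have e1 : ∑ c ∈ C, ∑ a ∈ S, dist a c = ∑ a ∈ S, ∑ c ∈ C, dist a c := Finset.sum_comm
          have e2 : ∑ c ∈ C, ∑ b ∈ T, dist c b = ∑ b ∈ T, ∑ c ∈ C, dist b c := by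
            rw [Finset.sum_comm]
            exact Finset.sum_congr rfl fun b _ => Finset.sum_congr rfl fun c _ => dist_comm c b
          rw [e1, e2, ← Finset.sum_union (Finset.disjoint_sdiff : Disjoint S (G i₀ \ S)),
            Finset.union_sdiff_of_subset hSsub]
  have hB2 : ∑ a ∈ S, ∑ b ∈ T, dist a b ≤ interDist G := by
    set E₂ : Finset (Fin x × Fin x) := {i₀} ×ˢ ((univ : Finset (Fin x)) \ {i₀}) with hE₂
    have hanti : ∀ p ∈ E₂, Prod.swap p ∉ E₂ := by
      intro p hp hq
      rw [hE₂, Finset.mem_product, Finset.mem_sdiff, Finset.mem_singleton] at hp hq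
      simp only [Prod.fst_swap, Prod.snd_swap, Finset.mem_singleton] at hq
      exact hq.2.2 hp.1
    have heq : ∑ a ∈ G i₀, ∑ c ∈ C, dist a c
        = ∑ i ∈ ({i₀} : Finset (Fin x)), ∑ j ∈ (univ : Finset (Fin x)) \ {i₀}, pairD G i j := by
      rw [hCdef, ← hsingle]
      exact sum_biUnion_pairs G hdisj {i₀} _
    calc ∑ a ∈ S, ∑ b ∈ T, dist a b ≤ ∑ a ∈ G i₀, ∑ c ∈ C, dist a c := havg
      _ = ∑ i ∈ ({i₀} : Finset (Fin x)), ∑ j ∈ (univ : Finset (Fin x)) \ {i₀}, pairD G i j := heq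
      _ = ∑ p ∈ E₂, pairD G p.1 p.2 := by
          rw [hE₂, Finset.sum_product]
      _ ≤ interDist G := sum_pairD_le G E₂ hanti
  refine ⟨A, hAV, hAcard, ?_⟩
  rw [hcut]
  have := hB1
  have := hB2
  linarith
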